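/- Fix σ ∈ ℕ (the L-BFGS memory length), constants δ > 0, ε ≥ 0, and 0 < μ ≤ M with μI ⪯ X^⊤X ⪯ MI. Let {w_t}_{t≥0} ⊂ ℝ^p be any sequence with u_t := w_t − w_{t−1} ≠ 0 for all t ≥ 1, and suppose that for each t ≥ 1 there is a symmetric matrix P_t with δI ⪯ P_t ⪯ (1+ε)I such that r_t := X^⊤ P_t X u_t. For each t ≥ 1 define σ̃ = min{t, σ}, ρ_j = 1/(r_j^⊤ u_j), V_j = I − ρ_j r_j u_j^⊤, B_t^{(0)} = ((r_t^⊤ r_t)/(r_t^⊤ u_t)) I, the recursion B_t^{(ℓ+1)} = V_{j_ℓ}^⊤ B_t^{(ℓ)} V_{j_ℓ} + ρ_{j_ℓ} u_{j_ℓ} u_{j_ℓ}^⊤ with j_ℓ = t − σ̃ + ℓ + 1 for ℓ = 0, …, σ̃−1, and B_t := B_t^{(σ̃)}. Then there exist constants c_2 ≥ c_1 > 0, depending only on δ, ε, μ, M, σ, and p (and not on t or the sequence {w_t}), such that c_1 I ⪯ B_t ⪯ c_2 I for all t ≥ 1. -/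

import Mathlib

open Matrix Finset

noncomputable section

namespace Stmt2

/-- `u_t = w_t − w_{t−1}`. -/
def uvec {p : ℕ} (w : ℕ → Fin p → ℝ) (t : ℕ) : Fin p → ℝ :=
  w t - w (t - 1)

/-- `r_t = Xᵀ P_t X u_t`. -/
def rvec {n p : ℕ} (X : Matrix (Fin n) (Fin p) ℝ)
    (P : ℕ → Matrix (Fin n) (Fin n) ℝ) (w : ℕ → Fin p → ℝ) (t : ℕ) :
    Fin p → ℝ :=
  Xᵀ *ᵥ (P t *ᵥ (X *ᵥ uvec w t))

/-- `ρ_j = 1/(r_jᵀ u_j)`. -/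
def rho {n p : ℕ} (X : Matrix (Fin n) (Fin p) ℝ)
    (P : ℕ → Matrix (Fin n) (Fin n) ℝ) (w : ℕ → Fin p → ℝ) (j : ℕ) : ℝ :=
  1 / (rvec X P w j ⬝ᵥ uvec w j)

/-- `V_j = I − ρ_j r_j u_jᵀ`. -/
def Vmat {n p : ℕ} (X : Matrix (Fin n) (Fin p) ℝ)
    (P : ℕ → Matrix (Fin n) (Fin n) ℝ) (w : ℕ → Fin p → ℝ) (j : ℕ) :
    Matrix (Fin p) (Fin p) ℝ :=
  1 - rho X P w j • vecMulVec (rvec X P w j) (uvec w j)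



lemma dot_self_nonneg' {k : ℕ} (v : Fin k → ℝ) : 0 ≤ v ⬝ᵥ v :=
  Finset.sum_nonneg fun i _ => mul_self_nonneg _

lemma dot_self_pos {k : ℕ} {v : Fin k → ℝ} (hv : v ≠ 0) : 0 < v ⬝ᵥ v := by
  rcases (dot_self_nonneg' v).lt_or_eq with h | h
  · exact h
  · exfalso; apply hv; funext i
    have h0 : ∀ i ∈ Finset.univ, v i * v i = 0 := by
      intro i _
      exact (Finset.sum_eq_zero_iff_of_nonneg (fun i _ => mul_self_nonneg (v i))).mp h.symm i (Finset.mem_univ i)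
    have := h0 i (Finset.mem_univ i)
    have := mul_self_eq_zero.mp this
    simpa using this

lemma dot_transpose {k l : ℕ} (A : Matrix (Fin k) (Fin l) ℝ) (x : Fin l → ℝ) (y : Fin k → ℝ) :
    x ⬝ᵥ (Aᵀ *ᵥ y) = (A *ᵥ x) ⬝ᵥ y := by
  rw [Matrix.dotProduct_mulVec, Matrix.vecMul_transpose]

lemma vecMulVec_mulVec' {k : ℕ} (a b z : Fin k → ℝ) :
    Matrix.vecMulVec a b *ᵥ z = (b ⬝ᵥ z) • a := by
  ext i
  simp only [Matrix.vecMulVec, Matrix.mulVec, dotProduct, Matrix.of_apply,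
    Pi.smul_apply, smul_eq_mul, Finset.sum_mul]
  exact Finset.sum_congr rfl fun x _ => by ring

lemma psdCS {k : ℕ} {P : Matrix (Fin k) (Fin k) ℝ} (hsym : Pᵀ = P)
    (h0 : ∀ z, 0 ≤ z ⬝ᵥ (P *ᵥ z)) (a b : Fin k → ℝ) :
    (a ⬝ᵥ (P *ᵥ b))^2 ≤ (a ⬝ᵥ (P *ᵥ a)) * (b ⬝ᵥ (P *ᵥ b)) := by
  have hcomm : ∀ x y : Fin k → ℝ, x ⬝ᵥ (P *ᵥ y) = y ⬝ᵥ (P *ᵥ x) := by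
    intro x y
    conv_lhs => rw [← hsym]
    rw [dot_transpose, dotProduct_comm]
  have key : ∀ x : ℝ, 0 ≤ (b ⬝ᵥ (P *ᵥ b)) * (x * x) + (2 * (a ⬝ᵥ (P *ᵥ b))) * x + (a ⬝ᵥ (P *ᵥ a)) := by
    intro x
    have h := h0 (a + x • b)
    have hx : (a + x • b) ⬝ᵥ (P *ᵥ (a + x • b)) =
        (b ⬝ᵥ (P *ᵥ b)) * (x * x) + (2 * (a ⬝ᵥ (P *ᵥ b))) * x + (a ⬝ᵥ (P *ᵥ a)) := by
      rw [Matrix.mulVec_add, Matrix.mulVec_smul]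
      rw [add_dotProduct, smul_dotProduct, dotProduct_add,
        dotProduct_add, dotProduct_smul, dotProduct_smul]
      rw [hcomm b a]
      ring_nf
    rw [hx] at h; exact h
  have hd := discrim_le_zero key
  rw [discrim] at hd
  nlinarith [hd]

lemma dotCS {k : ℕ} (a b : Fin k → ℝ) : (a ⬝ᵥ b)^2 ≤ (a ⬝ᵥ a) * (b ⬝ᵥ b) := by
  have := psdCS (P := (1 : Matrix (Fin k) (Fin k) ℝ)) (Matrix.transpose_one) (fun z => by rw [Matrix.one_mulVec]; exact dot_self_nonneg' z) a b
  simpa [Matrix.one_mulVec] using this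

lemma transpose_bound {k l : ℕ} (X : Matrix (Fin k) (Fin l) ℝ) (M : ℝ) (hM : 0 ≤ M)
    (hXub : ∀ v, (X *ᵥ v) ⬝ᵥ (X *ᵥ v) ≤ M * (v ⬝ᵥ v)) (y : Fin k → ℝ) :
    (Xᵀ *ᵥ y) ⬝ᵥ (Xᵀ *ᵥ y) ≤ M * (y ⬝ᵥ y) := by
  set r := Xᵀ *ᵥ y with hr
  have h1 : r ⬝ᵥ r = (X *ᵥ r) ⬝ᵥ y := by
    rw [show r ⬝ᵥ r = r ⬝ᵥ (Xᵀ *ᵥ y) from rfl, dot_transpose]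
  have h1 : (r ⬝ᵥ r)^2 = ((X *ᵥ r) ⬝ᵥ y)^2 := by rw [h1]
  have h2 : ((X *ᵥ r) ⬝ᵥ y)^2 ≤ ((X *ᵥ r) ⬝ᵥ (X *ᵥ r)) * (y ⬝ᵥ y) := dotCS _ _
  have h3 : ((X *ᵥ r) ⬝ᵥ (X *ᵥ r)) * (y ⬝ᵥ y) ≤ (M * (r ⬝ᵥ r)) * (y ⬝ᵥ y) :=
    mul_le_mul_of_nonneg_right (hXub r) (dot_self_nonneg' y)
  rcases (dot_self_nonneg' r).lt_or_eq with hrr | hrr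
  · have : (r ⬝ᵥ r)^2 ≤ M * (r ⬝ᵥ r) * (y ⬝ᵥ y) := by linarith
    nlinarith
  · rw [← hrr]; exact mul_nonneg hM (dot_self_nonneg' y)

lemma op_bound {k : ℕ} {P : Matrix (Fin k) (Fin k) ℝ} {c : ℝ} (hsym : Pᵀ = P) (hc : 0 ≤ c)
    (h0 : ∀ z, 0 ≤ z ⬝ᵥ (P *ᵥ z)) (hub : ∀ z, z ⬝ᵥ (P *ᵥ z) ≤ c * (z ⬝ᵥ z)) (v : Fin k → ℝ) :
    (P *ᵥ v) ⬝ᵥ (P *ᵥ v) ≤ c^2 * (v ⬝ᵥ v) := by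
  set y := P *ᵥ v with hy
  have h1 : y ⬝ᵥ y = v ⬝ᵥ (P *ᵥ y) := by
    conv_rhs => rw [← hsym]
    rw [dot_transpose]
  have h2 : (v ⬝ᵥ (P *ᵥ y))^2 ≤ (v ⬝ᵥ (P *ᵥ v)) * (y ⬝ᵥ (P *ᵥ y)) := psdCS hsym h0 v y
  have h3 : (v ⬝ᵥ (P *ᵥ v)) * (y ⬝ᵥ (P *ᵥ y)) ≤ (c * (v ⬝ᵥ v)) * (c * (y ⬝ᵥ y)) :=
    mul_le_mul (hub v) (hub y) (h0 y) (mul_nonneg hc (dot_self_nonneg' v))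
  rcases (dot_self_nonneg' y).lt_or_eq with hyy | hyy
  · nlinarith
  · rw [← hyy]; exact mul_nonneg (sq_nonneg c) (dot_self_nonneg' v)


set_option maxHeartbeats 1600000 in
/-- Lemma 1: stability of the multi-batch L-BFGS inverse
Hessian estimates.  The constants `c₁, c₂` depend only on `δ, ε, μ, M, σ, p`
and not on `t`, the data `X`, or the sequence `{w_t}`. -/
theorem lbfgs_inverse_hessian_bounds
    (p σ : ℕ) (δ ε μ M : ℝ)
    (hδ : 0 < δ) (hε : 0 ≤ ε) (hμ0 : 0 < μ) (hμM : μ ≤ M) :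
    ∃ c1 c2 : ℝ, 0 < c1 ∧ c1 ≤ c2 ∧
      ∀ (n : ℕ) (X : Matrix (Fin n) (Fin p) ℝ)
        (w : ℕ → Fin p → ℝ) (P : ℕ → Matrix (Fin n) (Fin n) ℝ)
        (B : ℕ → ℕ → Matrix (Fin p) (Fin p) ℝ),
        -- μ I ⪯ XᵀX ⪯ M I
        (∀ v : Fin p → ℝ, μ * (v ⬝ᵥ v) ≤ (X *ᵥ v) ⬝ᵥ (X *ᵥ v)) →
        (∀ v : Fin p → ℝ, (X *ᵥ v) ⬝ᵥ (X *ᵥ v) ≤ M * (v ⬝ᵥ v)) →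
        -- each P_t is symmetric with δ I ⪯ P_t ⪯ (1+ε) I
        (∀ t, 1 ≤ t → (P t).IsSymm) →
        (∀ t, 1 ≤ t → ∀ z : Fin n → ℝ, δ * (z ⬝ᵥ z) ≤ z ⬝ᵥ (P t *ᵥ z)) →
        (∀ t, 1 ≤ t → ∀ z : Fin n → ℝ, z ⬝ᵥ (P t *ᵥ z) ≤ (1 + ε) * (z ⬝ᵥ z)) →
        -- u_t ≠ 0 for all t ≥ 1
        (∀ t, 1 ≤ t → uvec w t ≠ 0) →
        -- B_t^{(0)} = ((r_tᵀ r_t)/(r_tᵀ u_t)) I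
        (∀ t, 1 ≤ t → B t 0 =
          ((rvec X P w t ⬝ᵥ rvec X P w t) / (rvec X P w t ⬝ᵥ uvec w t)) •
            (1 : Matrix (Fin p) (Fin p) ℝ)) →
        -- B_t^{(ℓ+1)} = V_{j_ℓ}ᵀ B_t^{(ℓ)} V_{j_ℓ} + ρ_{j_ℓ} u_{j_ℓ} u_{j_ℓ}ᵀ,
        -- with j_ℓ = t − min(t,σ) + ℓ + 1 for ℓ = 0, …, min(t,σ) − 1
        (∀ t, 1 ≤ t → ∀ ℓ, ℓ < min t σ →
          B t (ℓ + 1) =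
            (Vmat X P w (t - min t σ + ℓ + 1))ᵀ * B t ℓ *
                Vmat X P w (t - min t σ + ℓ + 1) +
              rho X P w (t - min t σ + ℓ + 1) •
                vecMulVec (uvec w (t - min t σ + ℓ + 1))
                  (uvec w (t - min t σ + ℓ + 1))) →
        -- conclusion: c₁ I ⪯ B_t = B_t^{(min(t,σ))} ⪯ c₂ I for all t ≥ 1
        ∀ t, 1 ≤ t →
          (∀ z : Fin p → ℝ, c1 * (z ⬝ᵥ z) ≤ z ⬝ᵥ (B t (min t σ) *ᵥ z)) ∧
          (∀ z : Fin p → ℝ, z ⬝ᵥ (B t (min t σ) *ᵥ z) ≤ c2 * (z ⬝ᵥ z)) := by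
  have hM0 : 0 < M := lt_of_lt_of_le hμ0 hμM
  have h1ε : (0:ℝ) < 1 + ε := by linarith
  have hδμ : 0 < δ * μ := mul_pos hδ hμ0
  set C : ℝ := M^2*(1+ε)^2 with hCdef
  have hC0 : 0 < C := mul_pos (pow_pos hM0 2) (pow_pos h1ε 2)
  set A : ℝ := M*(1+ε)/(δ*μ) with hAdef
  have hA0 : 0 < A := div_pos (mul_pos hM0 h1ε) hδμ
  have hA2 : A^2*(δ*μ)^2 = C := by
    rw [hAdef, hCdef]; field_simp
  set K : ℝ := 2 + 2*A^2 with hKdef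
  have hK1 : (1:ℝ) ≤ K := by
    have := sq_nonneg A
    rw [hKdef]; linarith only [this]
  have hK0 : (0:ℝ) ≤ K := by linarith only [hK1]
  set d : ℝ := 1/(δ*μ) with hddef
  have hd0 : 0 < d := by rw [hddef]; positivity
  have hd1 : d * (δ*μ) = 1 := by rw [hddef]; field_simp
  set c0 : ℝ := C * d with hc0def
  have hc00 : 0 < c0 := mul_pos hC0 hd0
  have hc0δμ : c0 * (δ*μ) = C := by
    rw [hc0def, mul_assoc, hd1, mul_one]
  set β : ℝ := (δ*μ)/(16*C) with hβdef
  have hβ0 : 0 < β := div_pos hδμ (by linarith only [hC0])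
  have hβeq : β * (16*C) = δ*μ := by
    rw [hβdef]; field_simp
  set m : ℝ := min (δ*μ) β with hmdef
  have hm0 : 0 < m := lt_min hδμ hβ0
  have hmδμ : m ≤ δ*μ := min_le_left _ _
  have hmβ : m ≤ β := min_le_right _ _
  refine ⟨m/4^σ, max ((c0 + σ*d)*K^σ) (m/4^σ),
    div_pos hm0 (by positivity), le_max_right _ _, ?_⟩
  intro n X w P B hXlb hXub hPsym hPlb hPub hu hB0 hBrec
  -- the per-index facts
  have fact : ∀ j, 1 ≤ j →
      0 < uvec w j ⬝ᵥ uvec w j ∧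
      δ*μ*(uvec w j ⬝ᵥ uvec w j) ≤ rvec X P w j ⬝ᵥ uvec w j ∧
      rvec X P w j ⬝ᵥ uvec w j ≤ (1+ε)*M*(uvec w j ⬝ᵥ uvec w j) ∧
      rvec X P w j ⬝ᵥ rvec X P w j ≤ C*(uvec w j ⬝ᵥ uvec w j) := by
    intro j hj
    have hnu : 0 < uvec w j ⬝ᵥ uvec w j := dot_self_pos (hu j hj)
    have hP0 : ∀ z : Fin n → ℝ, 0 ≤ z ⬝ᵥ (P j *ᵥ z) := fun z =>
      le_trans (mul_nonneg hδ.le (dot_self_nonneg' z)) (hPlb j hj z)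
    have hPsym' : (P j)ᵀ = P j := hPsym j hj
    have hru : rvec X P w j ⬝ᵥ uvec w j =
        (X *ᵥ uvec w j) ⬝ᵥ (P j *ᵥ (X *ᵥ uvec w j)) := by
      show (Xᵀ *ᵥ (P j *ᵥ (X *ᵥ uvec w j))) ⬝ᵥ uvec w j = _
      rw [dotProduct_comm, dot_transpose]
    have hvv_lb : μ * (uvec w j ⬝ᵥ uvec w j) ≤ (X *ᵥ uvec w j) ⬝ᵥ (X *ᵥ uvec w j) :=
      hXlb (uvec w j)
    have hvv_ub : (X *ᵥ uvec w j) ⬝ᵥ (X *ᵥ uvec w j) ≤ M * (uvec w j ⬝ᵥ uvec w j) :=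
      hXub (uvec w j)
    refine ⟨hnu, ?_, ?_, ?_⟩
    · rw [hru]
      have h1 := hPlb j hj (X *ᵥ uvec w j)
      have h2 := mul_le_mul_of_nonneg_left hvv_lb hδ.le
      linarith only [h1, h2]
    · rw [hru]
      have h1 := hPub j hj (X *ᵥ uvec w j)
      have h2 := mul_le_mul_of_nonneg_left hvv_ub h1ε.le
      linarith only [h1, h2]
    · have h1 : rvec X P w j ⬝ᵥ rvec X P w j ≤
          M * ((P j *ᵥ (X *ᵥ uvec w j)) ⬝ᵥ (P j *ᵥ (X *ᵥ uvec w j))) :=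
        transpose_bound X M hM0.le hXub _
      have h2 : (P j *ᵥ (X *ᵥ uvec w j)) ⬝ᵥ (P j *ᵥ (X *ᵥ uvec w j)) ≤
          (1+ε)^2 * ((X *ᵥ uvec w j) ⬝ᵥ (X *ᵥ uvec w j)) :=
        op_bound hPsym' h1ε.le hP0 (hPub j hj) _
      have h5 := mul_le_mul_of_nonneg_left hvv_ub
        (mul_nonneg hM0.le (sq_nonneg (1+ε)))
      have h6 := mul_le_mul_of_nonneg_left h2 hM0.le
      rw [hCdef]
      linarith only [h1, h5, h6]
  intro t ht
  -- the induction on ℓ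
  have main : ∀ ℓ, ℓ ≤ min t σ → ∀ z : Fin p → ℝ,
      m / 4^ℓ * (z ⬝ᵥ z) ≤ z ⬝ᵥ (B t ℓ *ᵥ z) ∧
      z ⬝ᵥ (B t ℓ *ᵥ z) ≤ (c0 + ℓ*d) * K^ℓ * (z ⬝ᵥ z) := by
    intro ℓ
    induction ℓ with
    | zero =>
      intro _ z
      obtain ⟨hnu, hrul, hruu, hrr⟩ := fact t ht
      have hru0 : 0 < rvec X P w t ⬝ᵥ uvec w t :=
        lt_of_lt_of_le (by positivity) hrul
      have hform : z ⬝ᵥ (B t 0 *ᵥ z) =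
          (rvec X P w t ⬝ᵥ rvec X P w t)/(rvec X P w t ⬝ᵥ uvec w t) * (z ⬝ᵥ z) := by
        rw [hB0 t ht, Matrix.smul_mulVec, Matrix.one_mulVec,
          dotProduct_smul, smul_eq_mul]
      have hzz : 0 ≤ z ⬝ᵥ z := dot_self_nonneg' z
      have hCS := dotCS (rvec X P w t) (uvec w t)
      constructor
      · rw [hform]
        have hlow : m ≤ (rvec X P w t ⬝ᵥ rvec X P w t)/(rvec X P w t ⬝ᵥ uvec w t) := by
          rw [le_div_iff₀ hru0]
          have h_a := mul_le_mul_of_nonneg_right hrul hru0.le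
          have h_b : δ*μ*(rvec X P w t ⬝ᵥ uvec w t)*(uvec w t ⬝ᵥ uvec w t) ≤
              (rvec X P w t ⬝ᵥ rvec X P w t)*(uvec w t ⬝ᵥ uvec w t) := by
            nlinarith only [h_a, hCS]
          have h_c : δ*μ*(rvec X P w t ⬝ᵥ uvec w t) ≤
              rvec X P w t ⬝ᵥ rvec X P w t :=
            le_of_mul_le_mul_right (by linarith only [h_b]) hnu
          have h_d := mul_le_mul_of_nonneg_right hmδμ hru0.le
          linarith only [h_c, h_d]
        have h40 : m / 4^0 = m := by norm_num
        rw [h40]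
        exact mul_le_mul_of_nonneg_right hlow hzz
      · rw [hform]
        have hup : (rvec X P w t ⬝ᵥ rvec X P w t)/(rvec X P w t ⬝ᵥ uvec w t) ≤ c0 := by
          rw [div_le_iff₀ hru0]
          have h_a := mul_le_mul_of_nonneg_left hrul hc00.le
          have h_b : c0*(δ*μ*(uvec w t ⬝ᵥ uvec w t)) = C*(uvec w t ⬝ᵥ uvec w t) := by
            rw [← hc0δμ]; ring
          linarith only [h_a, h_b, hrr]
        have h40 : (c0 + (0:ℕ)*d) * K^0 = c0 := by norm_num
        rw [h40]
        exact mul_le_mul_of_nonneg_right hup hzz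
    | succ ℓ ih =>
      intro hle z
      have hlt : ℓ < min t σ := hle
      have IH := ih (le_of_lt hlt)
      set j : ℕ := t - min t σ + ℓ + 1 with hjdef
      have hj : 1 ≤ j := Nat.le_add_left 1 _
      obtain ⟨hnu, hrul, hruu, hrr⟩ := fact j hj
      have hru0 : 0 < rvec X P w j ⬝ᵥ uvec w j :=
        lt_of_lt_of_le (by positivity) hrul
      have hρval : rho X P w j = 1/(rvec X P w j ⬝ᵥ uvec w j) := rfl
      have hρ0 : 0 < rho X P w j := by rw [hρval]; positivity
      have hρru : rho X P w j * (rvec X P w j ⬝ᵥ uvec w j) = 1 := by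
        rw [hρval]; field_simp
      set s : ℝ := uvec w j ⬝ᵥ z with hsdef
      set κ : ℝ := rho X P w j * s with hκdef
      have hκru : κ * (rvec X P w j ⬝ᵥ uvec w j) = s := by
        rw [hκdef, mul_assoc, mul_comm s, ← mul_assoc, hρru, one_mul]
      have hzz : 0 ≤ z ⬝ᵥ z := dot_self_nonneg' z
      have hVz : Vmat X P w j *ᵥ z = z - κ • rvec X P w j := by
        show (1 - rho X P w j • vecMulVec (rvec X P w j) (uvec w j)) *ᵥ z = _
        rw [Matrix.sub_mulVec, Matrix.one_mulVec, Matrix.smul_mulVec,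
          vecMulVec_mulVec', smul_smul, ← hsdef, ← hκdef]
      set y : Fin p → ℝ := z - κ • rvec X P w j with hydef
      have hsplit : z ⬝ᵥ (B t (ℓ+1) *ᵥ z) =
          y ⬝ᵥ (B t ℓ *ᵥ y) + rho X P w j * s^2 := by
        rw [hBrec t ht ℓ hlt, ← hjdef]
        rw [Matrix.add_mulVec, dotProduct_add]
        congr 1
        · rw [← Matrix.mulVec_mulVec, ← Matrix.mulVec_mulVec, dot_transpose,
            hVz]
        · rw [Matrix.smul_mulVec, vecMulVec_mulVec',
            dotProduct_smul, dotProduct_smul, smul_eq_mul, smul_eq_mul,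
            dotProduct_comm z (uvec w j), ← hsdef]
          ring
      have hyy : y ⬝ᵥ y = z ⬝ᵥ z - 2*κ*(rvec X P w j ⬝ᵥ z)
          + κ^2*(rvec X P w j ⬝ᵥ rvec X P w j) := by
        rw [hydef]
        simp only [sub_dotProduct, dotProduct_sub,
          smul_dotProduct, dotProduct_smul, smul_eq_mul,
          dotProduct_comm (rvec X P w j) z]
        ring
      have hyy0 : 0 ≤ y ⬝ᵥ y := dot_self_nonneg' y
      have hs2 : s^2 ≤ (uvec w j ⬝ᵥ uvec w j) * (z ⬝ᵥ z) := by
        rw [hsdef]; exact dotCS (uvec w j) z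
      have hrz2 : (rvec X P w j ⬝ᵥ z)^2 ≤
          (rvec X P w j ⬝ᵥ rvec X P w j) * (z ⬝ᵥ z) := dotCS _ z
      have hrr0 : 0 ≤ rvec X P w j ⬝ᵥ rvec X P w j := dot_self_nonneg' _
      have hρs2 : 0 ≤ rho X P w j * s^2 := mul_nonneg hρ0.le (sq_nonneg s)
      -- κ² rr ≤ A² zz
      have hκ2rr : κ^2 * (rvec X P w j ⬝ᵥ rvec X P w j) ≤ A^2 * (z ⬝ᵥ z) := by
        have hc : κ^2 * (rvec X P w j ⬝ᵥ uvec w j)^2 = s^2 := by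
          rw [← hκru]; ring
        have hc2 : κ^2 * (rvec X P w j ⬝ᵥ uvec w j)^2 * (rvec X P w j ⬝ᵥ rvec X P w j)
            = s^2 * (rvec X P w j ⬝ᵥ rvec X P w j) := by
          linear_combination (rvec X P w j ⬝ᵥ rvec X P w j) * hc
        have ha : s^2 * (rvec X P w j ⬝ᵥ rvec X P w j) ≤
            ((uvec w j ⬝ᵥ uvec w j) * (z ⬝ᵥ z)) * (C * (uvec w j ⬝ᵥ uvec w j)) :=
          mul_le_mul hs2 hrr hrr0 (mul_nonneg hnu.le hzz)
        have hb : (δ*μ*(uvec w j ⬝ᵥ uvec w j))^2 ≤ (rvec X P w j ⬝ᵥ uvec w j)^2 := by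
          have h := mul_self_le_mul_self (by positivity) hrul
          nlinarith only [h]
        have hb2 := mul_le_mul_of_nonneg_left hb (mul_nonneg (sq_nonneg A) hzz)
        have hkey : A^2 * (z ⬝ᵥ z) * (δ*μ*(uvec w j ⬝ᵥ uvec w j))^2 =
            C * (uvec w j ⬝ᵥ uvec w j)^2 * (z ⬝ᵥ z) := by
          rw [← hA2]; ring
        have h1 : κ^2 * (rvec X P w j ⬝ᵥ rvec X P w j) * (rvec X P w j ⬝ᵥ uvec w j)^2 ≤
            A^2 * (z ⬝ᵥ z) * (rvec X P w j ⬝ᵥ uvec w j)^2 := by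
          nlinarith only [ha, hb2, hkey, hc2]
        exact le_of_mul_le_mul_right h1 (pow_pos hru0 2)
      -- ρ s² ≤ d zz
      have hρs2ub : rho X P w j * s^2 ≤ d * (z ⬝ᵥ z) := by
        have e1 := mul_le_mul_of_nonneg_left hs2 hρ0.le
        have e1b := mul_le_mul_of_nonneg_right e1 hδμ.le
        have e3 : (δ*μ*(uvec w j ⬝ᵥ uvec w j)) * (rho X P w j * (z ⬝ᵥ z)) ≤
            (rvec X P w j ⬝ᵥ uvec w j) * (rho X P w j * (z ⬝ᵥ z)) :=
          mul_le_mul_of_nonneg_right hrul (mul_nonneg hρ0.le hzz)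
        have e4 : (rvec X P w j ⬝ᵥ uvec w j) * (rho X P w j * (z ⬝ᵥ z)) = z ⬝ᵥ z := by
          rw [← mul_assoc, mul_comm (rvec X P w j ⬝ᵥ uvec w j) (rho X P w j),
            hρru, one_mul]
        have e5 : rho X P w j * s^2 * (δ*μ) ≤ z ⬝ᵥ z := by
          nlinarith only [e1b, e3, e4]
        have e6 := mul_le_mul_of_nonneg_left e5 hd0.le
        have e7 : d*(rho X P w j * s^2*(δ*μ)) = rho X P w j * s^2 := by
          linear_combination rho X P w j * s^2 * hd1
        linarith only [e6, e7]
      constructor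
      · -- lower bound
        have hBy1 := (IH y).1
        have hcL0 : 0 ≤ m / 4^ℓ := by positivity
        rw [hsplit]
        have hpow4 : m / 4^(ℓ+1) = (m / 4^ℓ) / 4 := by
          rw [pow_succ, ← div_div]
        by_cases hcase : κ^2 * (rvec X P w j ⬝ᵥ rvec X P w j) ≤ (z ⬝ᵥ z)/16
        · have hX2 : (2*κ*(rvec X P w j ⬝ᵥ z))^2 ≤
              4 * (κ^2 * (rvec X P w j ⬝ᵥ rvec X P w j)) * (z ⬝ᵥ z) := by
            have h := mul_le_mul_of_nonneg_left hrz2 (sq_nonneg κ)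
            nlinarith only [h]
          have ht0 : 0 ≤ κ^2 * (rvec X P w j ⬝ᵥ rvec X P w j) :=
            mul_nonneg (sq_nonneg κ) hrr0
          have hXle : 2*κ*(rvec X P w j ⬝ᵥ z) ≤ (z ⬝ᵥ z)/2 := by
            by_contra hcon
            push_neg at hcon
            have h2 : ((z ⬝ᵥ z)/2)*((z ⬝ᵥ z)/2) <
                (2*κ*(rvec X P w j ⬝ᵥ z))*(2*κ*(rvec X P w j ⬝ᵥ z)) :=
              mul_self_lt_mul_self (by linarith only [hzz]) hcon
            nlinarith only [h2, hX2, hcase, hzz]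
          have hyylb : (z ⬝ᵥ z)/2 ≤ y ⬝ᵥ y := by
            rw [hyy]; linarith only [ht0, hXle]
          have h5 : m / 4^ℓ * ((z ⬝ᵥ z)/2) ≤ y ⬝ᵥ (B t ℓ *ᵥ y) :=
            le_trans (mul_le_mul_of_nonneg_left hyylb hcL0) hBy1
          rw [hpow4]
          have hclzz := mul_nonneg hcL0 hzz
          linarith only [h5, hρs2, hclzz]
        · push_neg at hcase
          have heq : rho X P w j * s^2 = κ^2 * (rvec X P w j ⬝ᵥ uvec w j) := by
            rw [← hκru]
            linear_combination (κ^2*(rvec X P w j ⬝ᵥ uvec w j))*hρru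
          have hk : κ^2*(δ*μ*(uvec w j ⬝ᵥ uvec w j)) ≤
              κ^2*(rvec X P w j ⬝ᵥ uvec w j) :=
            mul_le_mul_of_nonneg_left hrul (sq_nonneg κ)
          have hrrC : κ^2*(rvec X P w j ⬝ᵥ rvec X P w j) ≤
              κ^2*(C*(uvec w j ⬝ᵥ uvec w j)) :=
            mul_le_mul_of_nonneg_left hrr (sq_nonneg κ)
          have h5 : (z ⬝ᵥ z)/16 < κ^2*(C*(uvec w j ⬝ᵥ uvec w j)) :=
            lt_of_lt_of_le hcase hrrC
          have h6 : (δ*μ)*((z ⬝ᵥ z)/16) < (δ*μ)*(κ^2*(C*(uvec w j ⬝ᵥ uvec w j))) :=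
            mul_lt_mul_of_pos_left h5 hδμ
          have h6b : β*C*(z ⬝ᵥ z) = (δ*μ)*(z ⬝ᵥ z)/16 := by
            linear_combination ((z ⬝ᵥ z)/16)*hβeq
          have h7 : (β * (z ⬝ᵥ z)) * C < ((δ*μ)*(κ^2*(uvec w j ⬝ᵥ uvec w j))) * C := by
            nlinarith only [h6, h6b]
          have h8 : β * (z ⬝ᵥ z) < (δ*μ)*(κ^2*(uvec w j ⬝ᵥ uvec w j)) :=
            lt_of_mul_lt_mul_right h7 hC0.le
          have h9 : β * (z ⬝ᵥ z) < rho X P w j * s^2 := by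
            linarith only [h8, hk, heq]
          have h10 : 0 ≤ y ⬝ᵥ (B t ℓ *ᵥ y) :=
            le_trans (mul_nonneg hcL0 hyy0) hBy1
          have h11 : m/4^(ℓ+1) * (z ⬝ᵥ z) ≤ β * (z ⬝ᵥ z) := by
            apply mul_le_mul_of_nonneg_right _ hzz
            calc m/4^(ℓ+1) ≤ m/1 := by
                  apply div_le_div_of_nonneg_left hm0.le one_pos
                  exact one_le_pow₀ (by norm_num)
              _ = m := div_one m
              _ ≤ β := hmβ
          linarith only [h9, h10, h11]
      · -- upper bound
        have hBy2 := (IH y).2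
        have hcU0 : 0 ≤ (c0 + ℓ*d) * K^ℓ := by
          apply mul_nonneg _ (pow_nonneg hK0 ℓ)
          have hld : (0:ℝ) ≤ (ℓ:ℝ)*d := mul_nonneg (Nat.cast_nonneg ℓ) hd0.le
          linarith only [hld, hc00]
        rw [hsplit]
        have hplus : 0 ≤ z ⬝ᵥ z + 2*κ*(rvec X P w j ⬝ᵥ z)
            + κ^2*(rvec X P w j ⬝ᵥ rvec X P w j) := by
          have h := dot_self_nonneg' (z + κ • rvec X P w j)
          have hexp : (z + κ • rvec X P w j) ⬝ᵥ (z + κ • rvec X P w j) =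
              z ⬝ᵥ z + 2*κ*(rvec X P w j ⬝ᵥ z)
                + κ^2*(rvec X P w j ⬝ᵥ rvec X P w j) := by
            simp only [add_dotProduct, dotProduct_add,
              smul_dotProduct, dotProduct_smul, smul_eq_mul,
              dotProduct_comm (rvec X P w j) z]
            ring
          rw [hexp] at h; exact h
        have hyyub : y ⬝ᵥ y ≤ K * (z ⬝ᵥ z) := by
          rw [hyy, hKdef]
          linarith only [hplus, hκ2rr]
        have h1 : y ⬝ᵥ (B t ℓ *ᵥ y) ≤ (c0 + ℓ*d) * K^ℓ * (K * (z ⬝ᵥ z)) :=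
          le_trans hBy2 (mul_le_mul_of_nonneg_left hyyub hcU0)
        have hpow : K^(ℓ+1) = K^ℓ * K := pow_succ K ℓ
        have hKp' : (1:ℝ) ≤ K^ℓ * K := by rw [← hpow]; exact one_le_pow₀ hK1
        have hint := mul_nonneg (mul_nonneg hd0.le hzz) (sub_nonneg.mpr hKp')
        have hfinal : (c0 + ℓ*d) * K^ℓ * (K * (z ⬝ᵥ z)) + d * (z ⬝ᵥ z) ≤
            (c0 + (↑(ℓ+1))*d) * K^(ℓ+1) * (z ⬝ᵥ z) := by
          push_cast
          rw [hpow]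
          nlinarith only [hint]
        linarith only [h1, hρs2ub, hfinal]
  -- conclude
  have hmin : min t σ ≤ σ := min_le_right t σ
  have hc1le : m/4^σ ≤ m/4^(min t σ) := by
    apply div_le_div_of_nonneg_left hm0.le (by positivity)
    exact pow_le_pow_right₀ (by norm_num) hmin
  have hc2ge : (c0 + (min t σ)*d) * K^(min t σ) ≤ (c0 + σ*d) * K^σ := by
    have hcast : ((min t σ : ℕ):ℝ) ≤ (σ:ℝ) := Nat.cast_le.mpr hmin
    have hmono := mul_le_mul_of_nonneg_right hcast hd0.le
    have hge : (0:ℝ) ≤ ((min t σ : ℕ):ℝ)*d := mul_nonneg (Nat.cast_nonneg _) hd0.le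
    apply mul_le_mul _ (pow_le_pow_right₀ hK1 hmin) (pow_nonneg hK0 _)
    · linarith only [hmono, hge, hc00]
    · linarith only [hmono, hge, hc00]
  constructor
  · intro z
    have h := (main (min t σ) le_rfl z).1
    have h2 := mul_le_mul_of_nonneg_right hc1le (dot_self_nonneg' z)
    linarith only [h, h2]
  · intro z
    have h := (main (min t σ) le_rfl z).2
    have h2 := mul_le_mul_of_nonneg_right hc2ge (dot_self_nonneg' z)
    have h3 : (c0 + σ*d)*K^σ ≤ max ((c0 + σ*d)*K^σ) (m/4^σ) := le_max_left _ _
    have h4 := mul_le_mul_of_nonneg_right h3 (dot_self_nonneg' z)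
    linarith only [h, h2, h4]


end Stmt2
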